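/- For integers with 0 ≤ k−r ≤ k ≤ ℓ ≤ ℓ+r ≤ n: D(n−k, k)·D(n−ℓ, ℓ) ≥ D(n−k+r, k−r)·D(n−ℓ−r, ℓ+r), where D denotes the Delannoy numbers. -/
import Mathlib

open Finset

/-- The Delannoy numbers. -/
def D : ℕ → ℕ → ℕ
  | 0, _ => 1
  | _ + 1, 0 => 1
  | m + 1, n + 1 => D m (n + 1) + D (m + 1) n + D m n

lemma D_zero_left (n : ℕ) : D 0 n = 1 := by rw [D]

lemma D_zero_right (m : ℕ) : D m 0 = 1 := by cases m <;> rw [D]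

lemma D_expand (m n : ℕ) : D (m + 1) (n + 1) = D m (n + 1) + D (m + 1) n + D m n := by rw [D]

lemma D_pos (m n : ℕ) : 0 < D m n := by
  induction m generalizing n with
  | zero => simp [D_zero_left]
  | succ m ih =>
    cases n with
    | zero => simp [D_zero_right]
    | succ n => rw [D_expand]; have := ih (n + 1); omega

lemma D_mono1 (m n : ℕ) : D m n ≤ D (m + 1) n := by
  cases n with
  | zero => simp [D_zero_right]
  | succ n => rw [D_expand]; omega

lemma D_mono2 (m n : ℕ) : D m n ≤ D m (n + 1) := by
  cases m with
  | zero => simp [D_zero_left]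
  | succ m => rw [D_expand]; omega

lemma D_symm_aux : ∀ s m n, m + n ≤ s → D m n = D n m := by
  intro s
  induction s with
  | zero =>
    intro m n h
    obtain rfl : m = 0 := by omega
    obtain rfl : n = 0 := by omega
    rfl
  | succ s ih =>
    intro m n h
    match m, n with
    | 0, n => rw [D_zero_left, D_zero_right]
    | m + 1, 0 => rw [D_zero_left, D_zero_right]
    | m + 1, n + 1 =>
      rw [D_expand, D_expand, ih m (n + 1) (by omega), ih (m + 1) n (by omega),
        ih m n (by omega)]
      ring

lemma D_symm (m n : ℕ) : D m n = D n m := D_symm_aux (m + n) m n le_rfl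

/-- Mutual induction: T-statement (TP2-type) and P-statement (anti-diagonal exchange). -/
lemma TP : ∀ s : ℕ,
    (∀ x y u v, x + y + u + v = s → u ≤ x → y ≤ v →
      D (x + 1) y * D u v ≤ D x y * D (u + 1) v) ∧
    (∀ x y u v, x + y + u + v = s → u ≤ x → y ≤ v →
      D (x + 1) y * D u (v + 1) ≤ D x (y + 1) * D (u + 1) v) := by
  intro s
  induction s using Nat.strong_induction_on with
  | _ s ih =>
    have ihT : ∀ x y u v, x + y + u + v < s → u ≤ x → y ≤ v →
        D (x + 1) y * D u v ≤ D x y * D (u + 1) v :=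
      fun x y u v h => (ih _ h).1 x y u v rfl
    have ihP : ∀ x y u v, x + y + u + v < s → u ≤ x → y ≤ v →
        D (x + 1) y * D u (v + 1) ≤ D x (y + 1) * D (u + 1) v :=
      fun x y u v h => (ih _ h).2 x y u v rfl
    have hT : ∀ x y u v, x + y + u + v = s → u ≤ x → y ≤ v →
        D (x + 1) y * D u v ≤ D x y * D (u + 1) v := by
      intro x y u v hs hux hyv
      cases y with
      | zero =>
        rw [D_zero_right, D_zero_right]
        simpa using D_mono1 u v
      | succ Y =>
        obtain ⟨V, rfl⟩ : ∃ V, v = V + 1 := ⟨v - 1, by omega⟩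
        have t1 : D (x + 1) Y * D u (V + 1) ≤ D x (Y + 1) * D (u + 1) V :=
          ihP x Y u V (by omega) hux (by omega)
        have t2 : D u (V + 1) * D x Y ≤ D u V * D x (Y + 1) := by
          have h := ihT V u Y x (by omega) (by omega) hux
          rwa [D_symm (V + 1) u, D_symm Y x, D_symm V u, D_symm (Y + 1) x] at h
        rw [D_expand x Y, D_expand u V]
        nlinarith [t1, t2]
    refine ⟨hT, ?_⟩
    intro x y u v hs hux hyv
    cases y with
    | zero =>
      -- use T(v, u, 0, x) at sum s, plus symmetry and monotonicity
      have h := hT v u 0 x (by omega) (by omega) hux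
      rw [D_symm (v + 1) u, D_symm 0 x, D_symm v u, D_symm 1 x] at h
      rw [D_zero_right x, mul_one] at h
      rw [D_zero_right (x + 1), one_mul]
      calc D u (v + 1) ≤ D u v * D x 1 := h
        _ ≤ D (u + 1) v * D x 1 := Nat.mul_le_mul_right _ (D_mono1 u v)
        _ = D x 1 * D (u + 1) v := mul_comm _ _
    | succ Y =>
      obtain ⟨V, rfl⟩ : ∃ V, v = V + 1 := ⟨v - 1, by omega⟩
      cases u with
      | zero =>
        -- use T(x, Y+1, 0, V+1) at sum s
        have h := hT x (Y + 1) 0 (V + 1) (by omega) (by omega) hyv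
        rw [D_zero_left, mul_one] at h
        rw [D_zero_left, mul_one]
        calc D (x + 1) (Y + 1) ≤ D x (Y + 1) * D 1 (V + 1) := h
          _ ≤ D x (Y + 1 + 1) * D 1 (V + 1) := Nat.mul_le_mul_right _ (D_mono2 _ _)
      | succ U =>
        obtain ⟨X, rfl⟩ : ∃ X, x = X + 1 := ⟨x - 1, by omega⟩
        have hUX : U ≤ X := by omega
        have hYV : Y ≤ V := by omega
        have e1 : D (X + 1) (Y + 1) * D U (V + 2) ≤ D X (Y + 2) * D (U + 1) (V + 1) :=
          ihP X (Y + 1) U (V + 1) (by omega) hUX (by omega)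
        have e3 : D (X + 1) (Y + 1) * D U (V + 1) ≤ D X (Y + 1) * D (U + 1) (V + 1) :=
          ihT X (Y + 1) U (V + 1) (by omega) hUX (by omega)
        have e5 : D (X + 2) Y * D (U + 1) (V + 1) ≤ D (X + 1) (Y + 1) * D (U + 2) V :=
          ihP (X + 1) Y (U + 1) V (by omega) (by omega) hYV
        have e8 : D (U + 1) (V + 1) * D (X + 1) Y ≤ D (U + 1) V * D (X + 1) (Y + 1) := by
          have h := ihT V (U + 1) Y (X + 1) (by omega) hYV (by omega)
          rwa [D_symm (V + 1) (U + 1), D_symm Y (X + 1), D_symm V (U + 1),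
            D_symm (Y + 1) (X + 1)] at h
        have e9 : D (X + 1) Y * D U (V + 1) ≤ D X (Y + 1) * D (U + 1) V :=
          ihP X Y U V (by omega) hUX hYV
        have hm : 0 < D (X + 1) (Y + 1) * D (U + 1) (V + 1) :=
          Nat.mul_pos (D_pos _ _) (D_pos _ _)
        have e4 : D (X + 2) Y * D U (V + 2) ≤ D X (Y + 2) * D (U + 2) V := by
          refine Nat.le_of_mul_le_mul_left ?_ hm
          calc D (X + 1) (Y + 1) * D (U + 1) (V + 1) * (D (X + 2) Y * D U (V + 2))
              = (D (X + 2) Y * D (U + 1) (V + 1)) * (D (X + 1) (Y + 1) * D U (V + 2)) := by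
                ring
            _ ≤ (D (X + 1) (Y + 1) * D (U + 2) V) * (D X (Y + 2) * D (U + 1) (V + 1)) :=
                Nat.mul_le_mul e5 e1
            _ = D (X + 1) (Y + 1) * D (U + 1) (V + 1) * (D X (Y + 2) * D (U + 2) V) := by
                ring
        have e6 : D (X + 2) Y * D U (V + 1) ≤ D X (Y + 1) * D (U + 2) V := by
          refine Nat.le_of_mul_le_mul_left ?_ hm
          calc D (X + 1) (Y + 1) * D (U + 1) (V + 1) * (D (X + 2) Y * D U (V + 1))
              = (D (X + 2) Y * D (U + 1) (V + 1)) * (D (X + 1) (Y + 1) * D U (V + 1)) := by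
                ring
            _ ≤ (D (X + 1) (Y + 1) * D (U + 2) V) * (D X (Y + 1) * D (U + 1) (V + 1)) :=
                Nat.mul_le_mul e5 e3
            _ = D (X + 1) (Y + 1) * D (U + 1) (V + 1) * (D X (Y + 1) * D (U + 2) V) := by
                ring
        have e7 : D (X + 1) Y * D U (V + 2) ≤ D X (Y + 2) * D (U + 1) V := by
          refine Nat.le_of_mul_le_mul_left ?_ hm
          calc D (X + 1) (Y + 1) * D (U + 1) (V + 1) * (D (X + 1) Y * D U (V + 2))
              = (D (U + 1) (V + 1) * D (X + 1) Y) * (D (X + 1) (Y + 1) * D U (V + 2)) := by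
                ring
            _ ≤ (D (U + 1) V * D (X + 1) (Y + 1)) * (D X (Y + 2) * D (U + 1) (V + 1)) :=
                Nat.mul_le_mul e8 e1
            _ = D (X + 1) (Y + 1) * D (U + 1) (V + 1) * (D X (Y + 2) * D (U + 1) V) := by
                ring
        -- now expand everything and add up
        rw [show X + 1 + 1 = X + 2 from rfl, show U + 1 + 1 = U + 2 from rfl,
          show V + 1 + 1 = V + 2 from rfl, show Y + 1 + 1 = Y + 2 from rfl]
        rw [D_expand (X + 1) Y, D_expand U (V + 1), D_expand X (Y + 1),
          D_expand (U + 1) V]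
        nlinarith [e1, e3, e5, e8, e9, e4, e6, e7]

lemma P_step (x y u v : ℕ) (hux : u ≤ x) (hyv : y ≤ v) :
    D (x + 1) y * D u (v + 1) ≤ D x (y + 1) * D (u + 1) v :=
  (TP (x + y + u + v)).2 x y u v rfl hux hyv

lemma chain : ∀ r e U Y : ℕ, r ≤ e →
    D (U + e + r) Y * D U (Y + e + r) ≤ D (U + e) (Y + r) * D (U + r) (Y + e) := by
  intro r
  induction r with
  | zero => intro e U Y _; simp
  | succ r ihr =>
    intro e U Y hre
    obtain ⟨e, rfl⟩ : ∃ e', e = e' + 1 := ⟨e - 1, by omega⟩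
    have step : D (U + (e + 1) + (r + 1)) Y * D U (Y + (e + 1) + (r + 1)) ≤
        D (U + (e + 1) + r) (Y + 1) * D (U + 1) (Y + (e + 1) + r) := by
      have h := P_step (U + (e + 1) + r) Y U (Y + (e + 1) + r) (by omega) (by omega)
      calc D (U + (e + 1) + (r + 1)) Y * D U (Y + (e + 1) + (r + 1))
          = D (U + (e + 1) + r + 1) Y * D U (Y + (e + 1) + r + 1) := by ring_nf
        _ ≤ D (U + (e + 1) + r) (Y + 1) * D (U + 1) (Y + (e + 1) + r) := h
    have h2 := ihr e (U + 1) (Y + 1) (by omega)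
    calc D (U + (e + 1) + (r + 1)) Y * D U (Y + (e + 1) + (r + 1))
        ≤ D (U + (e + 1) + r) (Y + 1) * D (U + 1) (Y + (e + 1) + r) := step
      _ = D (U + 1 + e + r) (Y + 1) * D (U + 1) (Y + 1 + e + r) := by ring_nf
      _ ≤ D (U + 1 + e) (Y + 1 + r) * D (U + 1 + r) (Y + 1 + e) := h2
      _ = D (U + (e + 1)) (Y + (r + 1)) * D (U + (r + 1)) (Y + (e + 1)) := by ring_nf

theorem stmt18 (n k l r : ℕ) (hrk : r ≤ k) (hkl : k ≤ l) (hln : l + r ≤ n) :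
    D (n - k + r) (k - r) * D (n - l - r) (l + r) ≤ D (n - k) k * D (n - l) l := by
  have key := chain r (r + (l - k)) (n - l - r) (k - r) (Nat.le_add_right _ _)
  have e1 : n - l - r + (r + (l - k)) + r = n - k + r := by omega
  have e2 : k - r + (r + (l - k)) + r = l + r := by omega
  have e3 : n - l - r + (r + (l - k)) = n - k := by omega
  have e4 : k - r + r = k := by omega
  have e5 : n - l - r + r = n - l := by omega
  have e6 : k - r + (r + (l - k)) = l := by omega
  rw [e1, e2, e3, e4, e5, e6] at key
  exact key
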